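/- Let n be a nonnegative integer. If ν_p(3n+1) is even for every prime p ≡ 2 (mod 3), then the number of 3-core partitions of n equals the product of (ν_p(3n+1)+1) over all primes p ≡ 1 (mod 3) dividing 3n+1; otherwise this number is 0. That is, |C_n| = ∏_{p prime, p ≡ 1 (mod 3)} (ν_p(3n+1)+1) if ν_p(3n+1) is even for all primes p ≡ 2 (mod 3), and |C_n| = 0 otherwise. -/

import Mathlib

@[ext] structure Ei where
  re : ℤ
  im : ℤ
deriving DecidableEq

namespace Ei

instance : Zero Ei := ⟨⟨0,0⟩⟩
instance : One Ei := ⟨⟨1,0⟩⟩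
instance : Add Ei := ⟨fun z w => ⟨z.re+w.re, z.im+w.im⟩⟩
instance : Neg Ei := ⟨fun z => ⟨-z.re, -z.im⟩⟩
instance : Mul Ei := ⟨fun z w => ⟨z.re*w.re - z.im*w.im, z.re*w.im + z.im*w.re - z.im*w.im⟩⟩

@[simp] lemma zero_re : (0 : Ei).re = 0 := rfl
@[simp] lemma zero_im : (0 : Ei).im = 0 := rfl
@[simp] lemma one_re : (1 : Ei).re = 1 := rfl
@[simp] lemma one_im : (1 : Ei).im = 0 := rfl
@[simp] lemma add_re (z w : Ei) : (z + w).re = z.re + w.re := rfl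
@[simp] lemma add_im (z w : Ei) : (z + w).im = z.im + w.im := rfl
@[simp] lemma neg_re (z : Ei) : (-z).re = -z.re := rfl
@[simp] lemma neg_im (z : Ei) : (-z).im = -z.im := rfl
@[simp] lemma mul_re (z w : Ei) : (z * w).re = z.re*w.re - z.im*w.im := rfl
@[simp] lemma mul_im (z w : Ei) : (z * w).im = z.re*w.im + z.im*w.re - z.im*w.im := rfl

instance commRing : CommRing Ei where
  add_assoc := by intros; ext <;> simp <;> ring
  zero_add := by intros; ext <;> simp
  add_zero := by intros; ext <;> simp
  add_comm := by intros; ext <;> simp <;> ring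
  neg_add_cancel := by intros; ext <;> simp
  mul_assoc := by intros; ext <;> simp <;> ring
  one_mul := by intros; ext <;> simp
  mul_one := by intros; ext <;> simp
  left_distrib := by intros; ext <;> simp <;> ring
  right_distrib := by intros; ext <;> simp <;> ring
  zero_mul := by intros; ext <;> simp
  mul_zero := by intros; ext <;> simp
  mul_comm := by intros; ext <;> simp <;> ring
  nsmul := fun n z => ⟨n * z.re, n * z.im⟩
  nsmul_zero := by intro x; ext <;> (show ((0:ℕ):ℤ) * _ = _; simp)
  nsmul_succ := by intro n x; ext <;> (show ((n+1 : ℕ):ℤ) * _ = (n:ℤ) * _ + _; push_cast; ring)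
  zsmul := fun n z => ⟨n * z.re, n * z.im⟩
  zsmul_zero' := by intro x; ext <;> (show (0:ℤ) * _ = _; simp)
  zsmul_succ' := by intro n x; ext <;> (show ((n.succ:ℕ):ℤ) * _ = ((n:ℕ):ℤ) * _ + _; push_cast; ring)
  zsmul_neg' := by intro n x; ext <;> (show (Int.negSucc n) * _ = -(((n.succ:ℕ):ℤ) * _); rw [Int.negSucc_eq]; push_cast; ring)
  natCast := fun n => ⟨n, 0⟩
  natCast_zero := by ext <;> simp
  natCast_succ := by intros; ext <;> simp
  intCast := fun n => ⟨n, 0⟩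
  intCast_ofNat := fun n => rfl
  intCast_negSucc := fun n => by
    ext
    · show Int.negSucc n = -(((n+1 : ℕ) : ℤ)); simp [Int.negSucc_eq]
    · show (0:ℤ) = -(0:ℤ); simp

@[simp] lemma natCast_re (n : ℕ) : (n : Ei).re = n := rfl
@[simp] lemma natCast_im (n : ℕ) : (n : Ei).im = 0 := rfl
@[simp] lemma intCast_re (n : ℤ) : (n : Ei).re = n := rfl
@[simp] lemma intCast_im (n : ℤ) : (n : Ei).im = 0 := rfl

end Ei

namespace Ei

def norm (z : Ei) : ℤ := z.re * z.re - z.re * z.im + z.im * z.im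

def conj (z : Ei) : Ei := ⟨z.re - z.im, -z.im⟩

@[simp] lemma conj_re (z : Ei) : (conj z).re = z.re - z.im := rfl
@[simp] lemma conj_im (z : Ei) : (conj z).im = -z.im := rfl

@[simp] lemma norm_mul (z w : Ei) : norm (z * w) = norm z * norm w := by
  simp [norm]; ring

@[simp] lemma norm_conj (z : Ei) : norm (conj z) = norm z := by simp [norm]; ring

lemma conj_mul (z w : Ei) : conj (z * w) = conj z * conj w := by ext <;> simp <;> ring

@[simp] lemma conj_natCast (n : ℕ) : conj (n : Ei) = n := by ext <;> simp

lemma mul_conj (z : Ei) : z * conj z = (norm z : Ei) := by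
  ext <;> simp only [mul_re, mul_im, conj_re, conj_im, intCast_re, intCast_im, norm] <;> ring

@[simp] lemma norm_one : norm 1 = 1 := by simp [norm]
@[simp] lemma norm_zero : norm 0 = 0 := by simp [norm]
@[simp] lemma norm_natCast (n : ℕ) : norm (n : Ei) = (n : ℤ) * n := by simp [norm]

lemma norm_nonneg (z : Ei) : 0 ≤ norm z := by
  have := sq_nonneg (2*z.re - z.im); have := sq_nonneg z.im
  simp [norm] at *; nlinarith

lemma norm_eq_zero_iff {z : Ei} : norm z = 0 ↔ z = 0 := by
  constructor
  · intro h
    simp [norm] at h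
    have him : z.im = 0 := by nlinarith [sq_nonneg (2*z.re - z.im), sq_nonneg z.im]
    have hre : z.re = 0 := by nlinarith
    ext <;> simp [him, hre]
  · rintro rfl; simp

lemma norm_pos {z : Ei} (hz : z ≠ 0) : 0 < norm z :=
  lt_of_le_of_ne (norm_nonneg z) (fun h => hz (norm_eq_zero_iff.mp h.symm))

lemma norm_dvd_of_dvd {z w : Ei} (h : z ∣ w) : norm z ∣ norm w := by
  obtain ⟨t, rfl⟩ := h; exact ⟨norm t, by simp⟩

instance : Nontrivial Ei := ⟨⟨0, 1, by decide⟩⟩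

/-- quotient for the Euclidean structure -/
def ediv (z w : Ei) : Ei :=
  let d := norm w
  let c := z * conj w
  ⟨(2*c.re + d) / (2*d), (2*c.im + d) / (2*d)⟩

def emod (z w : Ei) : Ei := z - w * ediv z w

lemma ediv_zero (z : Ei) : ediv z 0 = 0 := by
  ext <;> simp [ediv]

lemma emod_coord_bound {a d : ℤ} (hd : 0 < d) : 2 * |a - d * ((2*a + d) / (2*d))| ≤ d := by
  have h2d : (0:ℤ) < 2*d := by omega
  have heq := Int.emod_add_mul_ediv (2*a + d) (2*d)
  have h0 : 0 ≤ (2*a + d) % (2*d) := Int.emod_nonneg _ (by omega)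
  have h1 : (2*a + d) % (2*d) < 2*d := Int.emod_lt_of_pos _ h2d
  set q := (2*a + d) / (2*d) with hq
  set r := (2*a + d) % (2*d) with hr
  have h2 : 2*(a - d*q) = r - d := by linear_combination -heq
  rcases abs_cases (a - d*q) with ⟨h,_⟩|⟨h,_⟩ <;> omega

lemma norm_emod_lt (z : Ei) {w : Ei} (hw : w ≠ 0) : norm (emod z w) < norm w := by
  have hd : 0 < norm w := norm_pos hw
  set d := norm w with hdd
  set c := z * conj w with hc
  set q := ediv z w with hq
  have hqre : q.re = (2*c.re + d) / (2*d) := rfl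
  have hqim : q.im = (2*c.im + d) / (2*d) := rfl
  have hx : 2 * |c.re - d * q.re| ≤ d := by rw [hqre]; exact emod_coord_bound hd
  have hy : 2 * |c.im - d * q.im| ≤ d := by rw [hqim]; exact emod_coord_bound hd
  set x := c.re - d * q.re with hxd
  set y := c.im - d * q.im with hyd
  have hkey : norm (emod z w) * d = x*x - x*y + y*y := by
    have h1 : (emod z w) * conj w = (⟨x, y⟩ : Ei) := by
      have h0 : (emod z w) * conj w = c - (d : Ei) * q := by
        rw [emod, hdd, ← mul_conj w, hc, hq]; ring
      rw [h0]; ext <;> simp [sub_eq_add_neg, hxd, hyd] <;> ring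
    have := congrArg norm h1
    rw [norm_mul, norm_conj, ← hdd] at this
    rw [this]; rfl
  have hx1 : -d ≤ 2*x ∧ 2*x ≤ d := by rcases abs_cases x with ⟨h,_⟩|⟨h,_⟩ <;> omega
  have hy1 : -d ≤ 2*y ∧ 2*y ≤ d := by rcases abs_cases y with ⟨h,_⟩|⟨h,_⟩ <;> omega
  have h4 : 4 * (x*x - x*y + y*y) ≤ 3 * (d*d) := by
    nlinarith [sq_nonneg (x+y), sq_nonneg (x-y),
      mul_nonneg (by linarith [hx1.1, hx1.2] : (0:ℤ) ≤ d - 2*x) (by linarith [hx1.1] : (0:ℤ) ≤ d + 2*x),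
      mul_nonneg (by linarith [hy1.2] : (0:ℤ) ≤ d - 2*y) (by linarith [hy1.1] : (0:ℤ) ≤ d + 2*y)]
  nlinarith [hkey, hd]

instance : EuclideanDomain Ei :=
  { Ei.commRing, (inferInstance : Nontrivial Ei) with
    quotient := ediv
    remainder := emod
    quotient_zero := ediv_zero
    quotient_mul_add_remainder_eq := fun a b => by simp [emod]
    r := fun a b => a.norm.natAbs < b.norm.natAbs
    r_wellFounded := (measure (Int.natAbs ∘ norm)).wf
    remainder_lt := fun a b hb => Int.natAbs_lt_natAbs_of_nonneg_of_lt (norm_nonneg _) (norm_emod_lt a hb)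
    mul_left_not_lt := fun a b hb => by
      rw [not_lt, norm_mul, Int.natAbs_mul]
      exact Nat.le_mul_of_pos_right _ (Int.natAbs_pos.mpr (fun h => hb (norm_eq_zero_iff.mp h)))
  }

lemma isUnit_iff_norm {z : Ei} : IsUnit z ↔ norm z = 1 := by
  constructor
  · rintro ⟨u, rfl⟩
    have h1 : norm (u : Ei) * norm ((u⁻¹ : Eiˣ) : Ei) = 1 := by
      rw [← norm_mul]; simp
    have h2 := norm_nonneg (u : Ei)
    exact Int.eq_one_of_mul_eq_one_right h2 h1
  · intro h
    exact isUnit_iff_exists_inv.mpr ⟨conj z, by rw [mul_conj, h]; rfl⟩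

def uf : Fin 6 → Ei := ![⟨1,0⟩, ⟨-1,0⟩, ⟨0,1⟩, ⟨0,-1⟩, ⟨-1,-1⟩, ⟨1,1⟩]

lemma norm_uf (i : Fin 6) : norm (uf i) = 1 := by fin_cases i <;> rfl

lemma uf_injective : Function.Injective uf := by decide

lemma uf_mul_inv (i : Fin 6) : ∃ j, uf j * uf i = 1 := by
  fin_cases i
  · exact ⟨0, by decide⟩
  · exact ⟨1, by decide⟩
  · exact ⟨4, by decide⟩
  · exact ⟨5, by decide⟩
  · exact ⟨2, by decide⟩
  · exact ⟨3, by decide⟩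

lemma eq_uf_of_norm_one {z : Ei} (h : norm z = 1) : ∃ i, z = uf i := by
  rcases z with ⟨a, b⟩
  simp only [norm] at h
  have hb1 : -1 ≤ b := by nlinarith [sq_nonneg (2*a - b), sq_nonneg (b+1)]
  have hb2 : b ≤ 1 := by nlinarith [sq_nonneg (2*a - b), sq_nonneg (b-1)]
  have ha1 : -1 ≤ a := by nlinarith [sq_nonneg (a - 2*b), sq_nonneg (a+1)]
  have ha2 : a ≤ 1 := by nlinarith [sq_nonneg (a - 2*b), sq_nonneg (a-1)]
  interval_cases a <;> interval_cases b <;> first | decide | (exfalso; norm_num at h)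

@[simp] lemma sub_re (z w : Ei) : (z - w).re = z.re - w.re := by
  rw [sub_eq_add_neg, add_re, neg_re]; ring
@[simp] lemma sub_im (z w : Ei) : (z - w).im = z.im - w.im := by
  rw [sub_eq_add_neg, add_im, neg_im]; ring

lemma norm_mod3 (z : Ei) : ((norm z : ℤ) : ZMod 3) = ((z.re : ZMod 3) + (z.im : ZMod 3))^2 := by
  have h3 : (3 : ZMod 3) = 0 := rfl
  simp only [norm]
  push_cast
  linear_combination (-(z.re : ZMod 3) * (z.im : ZMod 3)) * h3

lemma intCast_dvd {n : ℤ} {z : Ei} : (n : Ei) ∣ z ↔ n ∣ z.re ∧ n ∣ z.im := by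
  constructor
  · rintro ⟨t, rfl⟩
    constructor
    · exact ⟨t.re, by simp⟩
    · exact ⟨t.im, by simp⟩
  · rintro ⟨⟨a, ha⟩, ⟨b, hb⟩⟩
    exact ⟨⟨a, b⟩, by ext <;> simp [ha, hb]⟩

lemma prime_of_norm_prime {π : Ei} (hp : Prime (norm π)) : Prime π := by
  rw [← UniqueFactorizationMonoid.irreducible_iff_prime]
  constructor
  · intro hu; rw [isUnit_iff_norm] at hu; rw [hu] at hp; exact hp.not_unit isUnit_one
  · intro a b hab
    have hn := congrArg norm hab
    rw [norm_mul] at hn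
    rcases (hp.irreducible.isUnit_or_isUnit hn) with h | h
    · left
      rw [Int.isUnit_iff] at h
      rcases h with h | h
      · exact isUnit_iff_norm.mpr h
      · exfalso; have := norm_nonneg a; omega
    · right
      rw [Int.isUnit_iff] at h
      rcases h with h | h
      · exact isUnit_iff_norm.mpr h
      · exfalso; have := norm_nonneg b; omega

lemma not_isUnit_natCast {p : ℕ} (hp : 2 ≤ p) : ¬ IsUnit (p : Ei) := by
  rw [isUnit_iff_norm, norm_natCast]
  intro h
  have : (p:ℤ) ≥ 2 := by exact_mod_cast hp
  nlinarith

lemma norm_eq_p_of_factor {p : ℕ} (hp : p.Prime) {a b : Ei} (hab : (p : Ei) = a * b)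
    (ha : ¬IsUnit a) (hb : ¬IsUnit b) : norm a = p := by
  have hn := congrArg norm hab
  rw [norm_mul, norm_natCast] at hn
  have hna := norm_nonneg a
  have hnb := norm_nonneg b
  have hnat : (norm a).natAbs * (norm b).natAbs = p^2 := by
    have : norm a * norm b = (p:ℤ)^2 := by rw [← hn]; ring
    have := congrArg Int.natAbs this
    rwa [Int.natAbs_mul, Int.natAbs_pow, Int.natAbs_natCast] at this
  have hdvd : (norm a).natAbs ∣ p^2 := ⟨(norm b).natAbs, hnat.symm⟩
  obtain ⟨i, hi, hieq⟩ := (Nat.dvd_prime_pow hp).mp hdvd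
  have hane : (norm a).natAbs ≠ 1 := by
    intro h1
    apply ha
    rw [isUnit_iff_norm]
    omega
  have hbne : (norm b).natAbs ≠ 1 := by
    intro h1
    apply hb
    rw [isUnit_iff_norm]
    omega
  interval_cases i
  · simp at hieq; omega
  · rw [pow_one] at hieq; omega
  · exfalso
    rw [hieq] at hnat
    have hp1 : 1 ≤ p := hp.one_lt.le.trans' (by omega)
    have : p^2 * (norm b).natAbs = p^2 * 1 := by omega
    have := Nat.eq_of_mul_eq_mul_left (by positivity) this
    omega

lemma prime_inert {p : ℕ} (hp : p.Prime) (h3 : p % 3 = 2) : Prime (p : Ei) := by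
  rw [← UniqueFactorizationMonoid.irreducible_iff_prime]
  constructor
  · exact not_isUnit_natCast hp.two_le
  · intro a b hab
    by_contra hcon
    push_neg at hcon
    have hna : norm a = p := norm_eq_p_of_factor hp hab hcon.1 hcon.2
    have hsq := norm_mod3 a
    rw [hna] at hsq
    have hcast : ((p : ℤ) : ZMod 3) = 2 := by
      push_cast
      rw [← ZMod.natCast_mod, h3]
      rfl
    rw [hcast] at hsq
    revert hsq
    generalize ((a.re : ZMod 3) + (a.im : ZMod 3)) = t
    revert t
    decide

lemma exists_norm_eq_split {p : ℕ} (hp : p.Prime) (h3 : p % 3 = 1) : ∃ π : Ei, norm π = p := by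
  haveI : Fact p.Prime := ⟨hp⟩
  have hp3 : p ≠ 3 := by omega
  have hp2 : p ≠ 2 := by omega
  -- an element of order 3 in (ZMod p)ˣ
  have hcard : 3 ∣ Fintype.card (ZMod p)ˣ := by
    rw [ZMod.card_units_eq_totient, Nat.totient_prime hp]
    omega
  obtain ⟨g, hg⟩ := exists_prime_orderOf_dvd_card 3 hcard
  set x : ZMod p := (g : ZMod p) with hxdef
  have hx3 : x ^ 3 = 1 := by
    have : g ^ 3 = 1 := by rw [← hg]; exact pow_orderOf_eq_one g
    rw [hxdef, ← Units.val_pow_eq_pow_val, this, Units.val_one]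
  have hx1 : x ≠ 1 := by
    intro h
    have : g = 1 := Units.val_eq_one.mp h
    rw [this, orderOf_one] at hg
    omega
  have hquad : x^2 + x + 1 = 0 := by
    have hfac : (x - 1) * (x^2 + x + 1) = 0 := by linear_combination hx3
    rcases mul_eq_zero.mp hfac with h | h
    · exact absurd (sub_eq_zero.mp h) hx1
    · exact h
  set m := x.val with hm
  have hmz : ((m^2 + m + 1 : ℕ) : ZMod p) = 0 := by
    push_cast
    rw [ZMod.natCast_val, ZMod.cast_id]
    exact hquad
  have hpm : p ∣ m^2 + m + 1 := (ZMod.natCast_eq_zero_iff ..).mp hmz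
  have hfEi : ((m^2 + m + 1 : ℕ) : Ei) = (⟨(m:ℤ), -1⟩ : Ei) * ⟨(m:ℤ)+1, 1⟩ := by
    ext <;> simp only [natCast_re, natCast_im, mul_re, mul_im] <;> push_cast <;> ring
  have hnotprime : ¬ Prime (p : Ei) := by
    intro hP
    have hdvd : (p : Ei) ∣ ((m^2 + m + 1 : ℕ) : Ei) := Nat.cast_dvd_cast hpm
    rw [hfEi] at hdvd
    have hcast : ((p:ℕ) : Ei) = (((p:ℕ):ℤ) : Ei) := by push_cast; rfl
    rcases hP.2.2 _ _ hdvd with h | h <;> rw [hcast, intCast_dvd] at h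
    · have h2 : ((p:ℕ):ℤ) ∣ 1 := dvd_neg.mp h.2
      have := Int.le_of_dvd one_pos h2
      have := hp.two_le
      omega
    · have h2 : ((p:ℕ):ℤ) ∣ 1 := h.2
      have := Int.le_of_dvd one_pos h2
      have := hp.two_le
      omega
  have hnotirr : ¬ Irreducible (p : Ei) := fun h =>
    hnotprime (UniqueFactorizationMonoid.irreducible_iff_prime.mp h)
  rw [irreducible_iff] at hnotirr
  push_neg at hnotirr
  obtain ⟨a, b, hab, hnu⟩ := hnotirr (not_isUnit_natCast hp.two_le)
  rcases not_or.mp (by tauto : ¬ (IsUnit a ∨ IsUnit b)) with ⟨ha, hb⟩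
  exact ⟨a, norm_eq_p_of_factor hp hab ha hb⟩

lemma not_dvd_conj_self {p : ℕ} (hp : p.Prime) (h3 : p % 3 = 1) {π : Ei}
    (hπ : norm π = p) : ¬ (π ∣ conj π) := by
  intro hdvd
  have hprime : Prime π := prime_of_norm_prime (by rw [hπ]; exact_mod_cast Nat.prime_iff_prime_int.mp hp)
  have hsub : conj π - π = ((-π.im : ℤ) : Ei) * ⟨1, 2⟩ := by
    ext <;> simp <;> ring
  have hd2 : π ∣ ((-π.im : ℤ) : Ei) * ⟨1, 2⟩ := by
    rw [← hsub]
    exact dvd_sub hdvd dvd_rfl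
  have hne3 : ¬ (π ∣ (⟨1, 2⟩ : Ei)) := by
    intro h
    have := norm_dvd_of_dvd h
    rw [hπ] at this
    have h32 : norm (⟨1,2⟩ : Ei) = 3 := rfl
    rw [h32] at this
    have : (p:ℤ) ∣ 3 := this
    have : (p:ℕ) ∣ 3 := by exact_mod_cast this
    have := (Nat.prime_dvd_prime_iff_eq hp (by norm_num)).mp this
    omega
  have hdim : π ∣ ((-π.im : ℤ) : Ei) := (hprime.2.2 _ _ hd2).resolve_right hne3
  have hpim : (p:ℤ) ∣ π.im := by
    have := norm_dvd_of_dvd hdim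
    rw [hπ] at this
    have hn : norm ((-π.im : ℤ) : Ei) = π.im * π.im := by simp [norm]
    rw [hn] at this
    have hip : Prime (p:ℤ) := Nat.prime_iff_prime_int.mp hp
    rcases hip.2.2 _ _ this with h | h <;> [exact h; exact h]
  have hdre : π ∣ ((π.re : ℤ) : Ei) := by
    have h1 : ((π.re : ℤ) : Ei) = π - (⟨0,1⟩ : Ei) * ((π.im : ℤ) : Ei) := by
      ext <;> simp
    rw [h1]
    apply dvd_sub dvd_rfl
    apply Dvd.dvd.mul_left
    have : ((π.im : ℤ) : Ei) = -(((-π.im : ℤ) : Ei)) := by push_cast; ring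
    rw [this]
    exact Dvd.dvd.neg_right hdim
  have hpre : (p:ℤ) ∣ π.re := by
    have := norm_dvd_of_dvd hdre
    rw [hπ] at this
    have hn : norm ((π.re : ℤ) : Ei) = π.re * π.re := by simp [norm]
    rw [hn] at this
    have hip : Prime (p:ℤ) := Nat.prime_iff_prime_int.mp hp
    rcases hip.2.2 _ _ this with h | h <;> [exact h; exact h]
  -- now p^2 ∣ norm π = p
  obtain ⟨s, hs⟩ := hpre
  obtain ⟨t, ht⟩ := hpim
  have : (p:ℤ) = (p:ℤ)^2 * (s*s - s*t + t*t) := by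
    have hh : norm π = (p:ℤ)^2 * (s*s - s*t + t*t) := by simp only [norm, hs, ht]; ring
    rw [hπ] at hh; exact hh
  have hppos : (2:ℤ) ≤ p := by exact_mod_cast hp.two_le
  have habs : (p:ℤ)^2 ∣ (p:ℤ) := ⟨_, this⟩
  have := Int.le_of_dvd (by positivity) habs
  nlinarith

@[simp] lemma norm_pow (z : Ei) (n : ℕ) : norm (z ^ n) = (norm z) ^ n := by
  induction n with
  | zero => simp
  | succ n ih => rw [pow_succ, norm_mul, ih, pow_succ]

lemma conj_conj (z : Ei) : conj (conj z) = z := by ext <;> simp <;> ring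

lemma conj_dvd {z w : Ei} (h : z ∣ w) : conj z ∣ conj w := by
  obtain ⟨t, rfl⟩ := h; exact ⟨conj t, by rw [conj_mul]⟩

/-- the set of elements of norm `N` -/
def TT (N : ℤ) : Set Ei := {z | norm z = N}

/-- the set of elements of norm `N` in the residue class of 3-cores -/
def SS (N : ℤ) : Set Ei := {z | norm z = N ∧ (z.re : ZMod 3) = 0 ∧ (z.im : ZMod 3) = 2}

def ρ (z : Ei) : ZMod 3 × ZMod 3 := ((z.re : ZMod 3), (z.im : ZMod 3))

def m3 (a b : ZMod 3 × ZMod 3) : ZMod 3 × ZMod 3 :=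
  (a.1 * b.1 - a.2 * b.2, a.1 * b.2 + a.2 * b.1 - a.2 * b.2)

lemma ρ_mul (z w : Ei) : ρ (z * w) = m3 (ρ z) (ρ w) := by
  unfold ρ m3
  rw [Prod.mk.injEq]
  constructor <;> simp only [mul_re, mul_im] <;> push_cast <;> ring

def ru : Fin 6 → ZMod 3 × ZMod 3 := ![(1,0),(2,0),(0,1),(0,2),(2,2),(1,1)]

lemma ρ_uf (i : Fin 6) : ρ (uf i) = ru i := by fin_cases i <;> decide

lemma L1 : ∀ w : ZMod 3 × ZMod 3, (w.1 + w.2)^2 = 1 → ∃ i : Fin 6, m3 (ru i) w = (0, 2) := by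
  decide

lemma L2 : ∀ i j : Fin 6, m3 (ru i) (0,2) = m3 (ru j) (0,2) → i = j := by decide

lemma uf_ne_zero (i : Fin 6) : uf i ≠ 0 := by
  intro h
  have := norm_uf i
  rw [h, norm_zero] at this
  exact one_ne_zero this.symm

lemma natCast_mod3 {N : ℕ} (hN : N % 3 = 1) : ((N:ℤ) : ZMod 3) = 1 := by
  push_cast
  rw [← ZMod.natCast_mod, hN]
  rfl

lemma card_TT_eq_six_mul {N : ℕ} (hN : N % 3 = 1) :
    Nat.card (TT (N:ℤ)) = 6 * Nat.card (SS (N:ℤ)) := by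
  have hmemT : ∀ (i : Fin 6) (z : Ei), z ∈ SS (N:ℤ) → uf i * z ∈ TT (N:ℤ) := by
    intro i z hz
    simp only [TT, Set.mem_setOf_eq, norm_mul, norm_uf, one_mul]
    exact hz.1
  set f : Fin 6 × (SS (N:ℤ)) → TT (N:ℤ) :=
    fun x => ⟨uf x.1 * x.2.1, hmemT x.1 x.2.1 x.2.2⟩ with hf
  have hρS : ∀ z : Ei, z ∈ SS (N:ℤ) → ρ z = (0, 2) := by
    intro z hz
    unfold ρ
    rw [hz.2.1, hz.2.2]
  have hbij : Function.Bijective f := by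
    constructor
    · rintro ⟨i, z, hz⟩ ⟨j, w, hw⟩ heq
      simp only [hf, Subtype.mk.injEq] at heq
      have hρ := congrArg ρ heq
      rw [ρ_mul, ρ_mul, ρ_uf, ρ_uf, hρS z hz, hρS w hw] at hρ
      have hij : i = j := L2 i j hρ
      subst hij
      have : z = w := mul_left_cancel₀ (uf_ne_zero i) heq
      simp [this]
    · rintro ⟨z, hz⟩
      have hz' : norm z = (N:ℤ) := hz
      have hsq : ((ρ z).1 + (ρ z).2)^2 = 1 := by
        have := norm_mod3 z
        rw [hz', natCast_mod3 hN] at this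
        exact this.symm
      obtain ⟨i, hi⟩ := L1 (ρ z) hsq
      obtain ⟨j, hj⟩ := uf_mul_inv i
      have hsS : uf i * z ∈ SS (N:ℤ) := by
        refine ⟨by simp [norm_uf, hz'], ?_, ?_⟩
        · have : ρ (uf i * z) = (0,2) := by rw [ρ_mul, ρ_uf]; exact hi
          exact congrArg Prod.fst this
        · have : ρ (uf i * z) = (0,2) := by rw [ρ_mul, ρ_uf]; exact hi
          exact congrArg Prod.snd this
      refine ⟨⟨j, ⟨uf i * z, hsS⟩⟩, ?_⟩
      simp only [hf, Subtype.mk.injEq]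
      rw [← mul_assoc, hj, one_mul]
  calc Nat.card (TT (N:ℤ)) = Nat.card (Fin 6 × (SS (N:ℤ))) :=
        (Nat.card_congr (Equiv.ofBijective f hbij)).symm
    _ = 6 * Nat.card (SS (N:ℤ)) := by rw [Nat.card_prod, Nat.card_eq_fintype_card, Fintype.card_fin]

lemma card_TT_one : Nat.card (TT (1:ℤ)) = 6 := by
  have : TT (1:ℤ) = Set.range uf := by
    ext z
    constructor
    · intro hz
      obtain ⟨i, hi⟩ := eq_uf_of_norm_one hz
      exact ⟨i, hi.symm⟩
    · rintro ⟨i, rfl⟩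
      exact norm_uf i
  rw [this, Nat.card_range_of_injective uf_injective, Nat.card_eq_fintype_card, Fintype.card_fin]

lemma self_mul_conj_eq {N : ℕ} {z : Ei} (hz : norm z = (N:ℤ)) : z * conj z = ((N:ℕ) : Ei) := by
  rw [mul_conj, hz]
  push_cast
  rfl

lemma dvd_of_prime_natCast {p N : ℕ} (hprime : Prime (p : Ei)) (hpN : p ∣ N) {z : Ei}
    (hz : norm z = (N:ℤ)) : (p : Ei) ∣ z := by
  have h1 : (p : Ei) ∣ z * conj z := by
    rw [self_mul_conj_eq hz]
    exact Nat.cast_dvd_cast hpN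
  rcases hprime.2.2 _ _ h1 with h | h
  · exact h
  · have := conj_dvd h
    rw [conj_conj, conj_natCast] at this
    exact this

lemma inert_empty {p N : ℕ} (hp : p.Prime) (h3 : p % 3 = 2) (hpN : p ∣ N)
    (hpp : ¬ (p^2 ∣ N)) : TT (N:ℤ) = ∅ := by
  ext z
  simp only [TT, Set.mem_setOf_eq, Set.mem_empty_iff_false, iff_false]
  intro hz
  obtain ⟨t, ht⟩ := dvd_of_prime_natCast (prime_inert hp h3) hpN hz
  apply hpp
  have : (N:ℤ) = (p:ℤ)^2 * norm t := by
    rw [← hz, ht, norm_mul, norm_natCast]; ring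
  have h2 : ((p^2 : ℕ) : ℤ) ∣ (N:ℤ) := ⟨norm t, by push_cast; exact this⟩
  exact_mod_cast h2

lemma inert_step {p N M : ℕ} (hp : p.Prime) (h3 : p % 3 = 2) (hNM : N = p^2 * M) :
    Nat.card (TT (N:ℤ)) = Nat.card (TT (M:ℤ)) := by
  have hp0 : ((p:ℕ):ℤ) ≠ 0 := by exact_mod_cast hp.pos.ne'
  have hmem : ∀ z : Ei, z ∈ TT (M:ℤ) → (p:Ei) * z ∈ TT (N:ℤ) := by
    intro z hz
    have hz' : norm z = (M:ℤ) := hz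
    simp only [TT, Set.mem_setOf_eq, norm_mul, norm_natCast, hz', hNM]
    push_cast
    ring
  set f : TT (M:ℤ) → TT (N:ℤ) := fun z => ⟨(p:Ei) * z.1, hmem z.1 z.2⟩ with hf
  have hbij : Function.Bijective f := by
    constructor
    · rintro ⟨z, hz⟩ ⟨w, hw⟩ heq
      simp only [hf, Subtype.mk.injEq] at heq
      have hpe : (p : Ei) ≠ 0 := by
        intro h
        have := congrArg norm h
        rw [norm_natCast, norm_zero] at this
        apply hp0
        nlinarith [this]
      have := mul_left_cancel₀ hpe heq
      simp [this]
    · rintro ⟨z, hz⟩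
      have hz' : norm z = (N:ℤ) := hz
      obtain ⟨t, ht⟩ := dvd_of_prime_natCast (prime_inert hp h3) ⟨p*M, by rw [hNM]; ring⟩ hz'
      have htM : norm t = (M:ℤ) := by
        have h1 : (N:ℤ) = (p:ℤ)*(p:ℤ) * norm t := by
          rw [← hz', ht, norm_mul, norm_natCast]; try ring
        have h2 : (p:ℤ)*(p:ℤ)*(M:ℤ) = (p:ℤ)*(p:ℤ) * norm t := by
          rw [← h1, hNM]; push_cast; try ring
        exact (mul_left_cancel₀ (by exact_mod_cast mul_ne_zero hp0 hp0) h2).symm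
      exact ⟨⟨t, htM⟩, by simp only [hf, Subtype.mk.injEq]; rw [ht]⟩
  exact (Nat.card_congr (Equiv.ofBijective f hbij)).symm

section Split

variable {p : ℕ} {π : Ei}

lemma split_pi_prime (hp : p.Prime) (hπ : norm π = (p:ℤ)) : Prime π :=
  prime_of_norm_prime (by rw [hπ]; exact_mod_cast Nat.prime_iff_prime_int.mp hp)

lemma split_pi_ne_zero (hp : p.Prime) (hπ : norm π = (p:ℤ)) : π ≠ 0 := by
  intro h
  rw [h, norm_zero] at hπ
  exact_mod_cast hp.pos.ne (by exact_mod_cast hπ)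

lemma not_dvd_of_norm_coprime {M : ℕ} (hM : ¬ p ∣ M) (hπ : norm π = (p:ℤ)) {w : Ei}
    (hw : norm w = (M:ℤ)) (h : π ∣ w ∨ conj π ∣ w) : False := by
  apply hM
  have hdvd : (p:ℤ) ∣ (M:ℤ) := by
    rcases h with h | h
    · have := norm_dvd_of_dvd h; rwa [hπ, hw] at this
    · have := norm_dvd_of_dvd h; rwa [norm_conj, hπ, hw] at this
  exact_mod_cast hdvd

lemma split_decomp (hp : p.Prime) (hπ : norm π = (p:ℤ)) :
    ∀ (k : ℕ) (M : ℕ) (z : Ei), ¬ p ∣ M → norm z = (p:ℤ)^k * M →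
    ∃ j, j ≤ k ∧ ∃ w, norm w = (M:ℤ) ∧ z = π^j * (conj π)^(k-j) * w := by
  have hprime : Prime π := split_pi_prime hp hπ
  have hp0 : ((p:ℕ):ℤ) ≠ 0 := by exact_mod_cast hp.pos.ne'
  intro k
  induction k with
  | zero => intro M z hM hz; exact ⟨0, le_refl 0, z, by simpa using hz, by simp⟩
  | succ k ih =>
    intro M z hM hz
    have hdvd : π ∣ z * conj z := by
      have h1 : π ∣ ((p:ℕ) : Ei) := by
        refine ⟨conj π, ?_⟩
        rw [mul_conj, hπ]
        push_cast
        rfl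
      have h2 : ((p:ℕ):Ei) ∣ z * conj z := by
        have hzN : norm z = ((p^(k+1)*M : ℕ):ℤ) := by rw [hz]; push_cast; ring
        rw [self_mul_conj_eq hzN]
        exact Nat.cast_dvd_cast ⟨p^k * M, by ring⟩
      exact h1.trans h2
    rcases hprime.2.2 _ _ hdvd with hcase | hcase
    · obtain ⟨t, rfl⟩ := hcase
      have ht : norm t = (p:ℤ)^k * M := by
        have h1 : norm π * norm t = (p:ℤ)^(k+1) * M := by rw [← norm_mul]; exact hz
        rw [hπ] at h1
        refine mul_left_cancel₀ hp0 ?_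
        rw [h1]; ring
      obtain ⟨j, hj, w, hw, hzw⟩ := ih M t hM ht
      refine ⟨j+1, by omega, w, hw, ?_⟩
      rw [hzw]
      have hkk : k + 1 - (j+1) = k - j := by omega
      rw [hkk, pow_succ]
      ring
    · obtain ⟨t', ht'⟩ := hcase
      have hzz : z = conj π * conj t' := by
        have := congrArg conj ht'
        rwa [conj_conj, conj_mul] at this
      have ht : norm (conj t') = (p:ℤ)^k * M := by
        have h1 : norm π * norm (conj t') = (p:ℤ)^(k+1) * M := by
          calc norm π * norm (conj t') = norm (conj π) * norm (conj t') := by simp [norm_conj]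
            _ = norm (conj π * conj t') := (norm_mul _ _).symm
            _ = norm z := by rw [← hzz]
            _ = (p:ℤ)^(k+1) * M := hz
        rw [hπ] at h1
        refine mul_left_cancel₀ hp0 ?_
        rw [h1]; ring
      obtain ⟨j, hj, w, hw, hzw⟩ := ih M (conj t') hM ht
      refine ⟨j, by omega, w, hw, ?_⟩
      rw [hzz, hzw]
      have hkk : k + 1 - j = (k - j) + 1 := by omega
      rw [hkk, pow_succ]
      ring

lemma split_inj_aux (hp : p.Prime) (h3 : p % 3 = 1) (hπ : norm π = (p:ℤ)) {M : ℕ}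
    (hM : ¬ p ∣ M) {w₁ w₂ : Ei} (hw₁ : norm w₁ = (M:ℤ)) (hw₂ : norm w₂ = (M:ℤ))
    {k j₁ j₂ : ℕ} (h₁ : j₁ ≤ k) (h₂ : j₂ ≤ k) (hle : j₁ ≤ j₂)
    (heq : π^j₁ * (conj π)^(k-j₁) * w₁ = π^j₂ * (conj π)^(k-j₂) * w₂) : j₁ = j₂ := by
  have hprime : Prime π := split_pi_prime hp hπ
  have hπ0 : π ≠ 0 := split_pi_ne_zero hp hπ
  have hcπ0 : conj π ≠ 0 := by
    intro h
    apply hπ0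
    have := congrArg conj h
    rwa [conj_conj] at this
  by_contra hne
  obtain ⟨d, hd1, rfl⟩ : ∃ d, 1 ≤ d ∧ j₂ = j₁ + d := ⟨j₂ - j₁, by omega, by omega⟩
  have hcancel : (conj π)^d * w₁ = π^d * w₂ := by
    have hne0 : π^j₁ * (conj π)^(k-(j₁+d)) ≠ 0 :=
      mul_ne_zero (pow_ne_zero _ hπ0) (pow_ne_zero _ hcπ0)
    apply mul_left_cancel₀ hne0
    have hk : k - j₁ = (k - (j₁+d)) + d := by omega
    rw [hk, pow_add] at heq
    calc π^j₁ * (conj π)^(k-(j₁+d)) * ((conj π)^d * w₁)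
        = π^j₁ * ((conj π)^(k-(j₁+d)) * (conj π)^d) * w₁ := by ring
      _ = π^(j₁+d) * (conj π)^(k-(j₁+d)) * w₂ := heq
      _ = π^j₁ * (conj π)^(k-(j₁+d)) * (π^d * w₂) := by rw [pow_add]; ring
  have hπdvd : π ∣ (conj π)^d * w₁ := by
    rw [hcancel]
    exact Dvd.dvd.mul_right (dvd_pow_self π (by omega)) w₂
  rcases hprime.2.2 _ _ hπdvd with h | h
  · exact not_dvd_conj_self hp h3 hπ (hprime.dvd_of_dvd_pow h)
  · exact not_dvd_of_norm_coprime hM hπ hw₁ (Or.inl h)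

lemma split_step (hp : p.Prime) (h3 : p % 3 = 1) (hπ : norm π = (p:ℤ)) {M : ℕ}
    (hM : ¬ p ∣ M) (k : ℕ) :
    Nat.card (TT ((p^k * M : ℕ) : ℤ)) = (k+1) * Nat.card (TT (M:ℤ)) := by
  have hπ0 : π ≠ 0 := split_pi_ne_zero hp hπ
  have hcπ0 : conj π ≠ 0 := by
    intro h; apply hπ0
    have := congrArg conj h
    rwa [conj_conj] at this
  have hmem : ∀ (j : Fin (k+1)) (w : Ei), w ∈ TT (M:ℤ) →
      π^(j:ℕ) * (conj π)^(k-(j:ℕ)) * w ∈ TT ((p^k*M : ℕ):ℤ) := by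
    intro j w hw
    have hw' : norm w = (M:ℤ) := hw
    have hjk : (j:ℕ) + (k - (j:ℕ)) = k := by omega
    simp only [TT, Set.mem_setOf_eq, norm_mul, norm_pow, norm_conj, hπ, hw']
    push_cast
    rw [← pow_add, hjk]
  set f : Fin (k+1) × TT (M:ℤ) → TT ((p^k*M : ℕ):ℤ) :=
    fun x => ⟨π^(x.1:ℕ) * (conj π)^(k-(x.1:ℕ)) * x.2.1, hmem x.1 x.2.1 x.2.2⟩ with hf
  have hbij : Function.Bijective f := by
    constructor
    · rintro ⟨j₁, w₁, hw₁⟩ ⟨j₂, w₂, hw₂⟩ heq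
      simp only [hf, Subtype.mk.injEq] at heq
      have hj : (j₁:ℕ) = (j₂:ℕ) := by
        rcases le_total (j₁:ℕ) (j₂:ℕ) with h | h
        · exact split_inj_aux hp h3 hπ hM hw₁ hw₂ (by omega) (by omega) h heq
        · exact (split_inj_aux hp h3 hπ hM hw₂ hw₁ (by omega) (by omega) h heq.symm).symm
      have hj' : j₁ = j₂ := Fin.ext hj
      subst hj'
      have hne0 : π^(j₁:ℕ) * (conj π)^(k-(j₁:ℕ)) ≠ 0 :=
        mul_ne_zero (pow_ne_zero _ hπ0) (pow_ne_zero _ hcπ0)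
      have := mul_left_cancel₀ hne0 heq
      simp [this]
    · rintro ⟨z, hz⟩
      have hz' : norm z = (p:ℤ)^k * (M:ℤ) := by
        have : norm z = ((p^k*M : ℕ):ℤ) := hz
        rw [this]; push_cast; ring
      obtain ⟨j, hj, w, hw, hzw⟩ := split_decomp hp hπ k M z hM hz'
      refine ⟨⟨⟨j, by omega⟩, ⟨w, hw⟩⟩, ?_⟩
      simp only [hf, Subtype.mk.injEq]
      exact hzw.symm
  calc Nat.card (TT ((p^k*M : ℕ):ℤ)) = Nat.card (Fin (k+1) × TT (M:ℤ)) :=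
        (Nat.card_congr (Equiv.ofBijective f hbij)).symm
    _ = (k+1) * Nat.card (TT (M:ℤ)) := by
        rw [Nat.card_prod, Nat.card_eq_fintype_card, Fintype.card_fin]

end Split

open scoped Classical in
/-- the predicted count (up to the factor 6) -/
noncomputable def gg (N : ℕ) : ℕ :=
  if (∀ q : ℕ, q.Prime → q % 3 = 2 → Even (N.factorization q)) then
    ∏ q ∈ N.primeFactors.filter (fun q => q % 3 = 1), (N.factorization q + 1)
  else 0

lemma mod3_eq_one_of_cast {M : ℕ} (h : (M : ZMod 3) = 1) : M % 3 = 1 := by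
  have h2 : ((M % 3 : ℕ) : ZMod 3) = 1 := by rwa [ZMod.natCast_mod]
  have h3 : M % 3 = 0 ∨ M % 3 = 1 ∨ M % 3 = 2 := by omega
  rcases h3 with h3|h3|h3
  · rw [h3] at h2; exact absurd h2 (by decide)
  · exact h3
  · rw [h3] at h2; exact absurd h2 (by decide)

lemma cast_mod3_eq {M : ℕ} (h : M % 3 = 1) : (M : ZMod 3) = 1 := by
  rw [← ZMod.natCast_mod, h]; rfl

theorem main_count : ∀ N : ℕ, 0 < N → N % 3 = 1 → Nat.card (TT (N:ℤ)) = 6 * gg N := by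
  intro N
  induction N using Nat.strong_induction_on with
  | _ N ih =>
    intro hN0 hN3
    rcases eq_or_lt_of_le (Nat.one_le_iff_ne_zero.mpr hN0.ne') with h1 | h1
    · -- N = 1
      subst h1
      simp only [Nat.cast_one]
      rw [card_TT_one]
      have : gg 1 = 1 := by
        rw [gg, if_pos]
        · simp
        · intro q _ _
          simp
      rw [this]
    · -- N > 1
      set p := N.minFac with hpdef
      have hp : p.Prime := Nat.minFac_prime (by omega)
      have hpN : p ∣ N := Nat.minFac_dvd N
      have hp3 : p ≠ 3 := by
        intro h
        rw [h] at hpN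
        omega
      have hpm : p % 3 = 1 ∨ p % 3 = 2 := by
        have : p % 3 ≠ 0 := by
          intro h
          have h3p : 3 ∣ p := Nat.dvd_of_mod_eq_zero h
          exact hp3 ((Nat.prime_dvd_prime_iff_eq (by norm_num) hp).mp h3p).symm
        omega
      have hfp1 : 1 ≤ N.factorization p := by
        rw [← Nat.Prime.pow_dvd_iff_le_factorization hp hN0.ne', pow_one]
        exact hpN
      rcases hpm with hpm | hpm
      · -- split case
        set k := N.factorization p with hk
        set M := N / p ^ k with hM
        have hpkdvd : p ^ k ∣ N := Nat.ordProj_dvd N p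
        have hNM : N = p ^ k * M := (Nat.mul_div_cancel' hpkdvd).symm
        have hM0 : M ≠ 0 := by
          intro h
          rw [h, mul_zero] at hNM
          omega
        have hMdvd : ¬ p ∣ M := Nat.not_dvd_ordCompl hp hN0.ne'
        have hMN : M < N := by
          have h2 : 2 ≤ p ^ k := by
            calc 2 = 2^1 := rfl
            _ ≤ p^k := Nat.pow_le_pow_left hp.two_le k |>.trans' (by
                  exact Nat.pow_le_pow_right (by omega) hfp1 |>.trans'
                    (by omega))
          calc M < 2 * M := by omega
            _ ≤ p ^ k * M := Nat.mul_le_mul_right M h2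
            _ = N := hNM.symm
        have hM3 : M % 3 = 1 := by
          apply mod3_eq_one_of_cast
          have hcN : ((N:ℕ) : ZMod 3) = 1 := cast_mod3_eq hN3
          have hcp : ((p:ℕ) : ZMod 3) = 1 := cast_mod3_eq hpm
          rw [hNM] at hcN
          push_cast at hcN
          rw [hcp] at hcN
          simpa using hcN
        obtain ⟨π, hπ⟩ := exists_norm_eq_split hp hpm
        have hstep : Nat.card (TT (N:ℤ)) = (k+1) * Nat.card (TT (M:ℤ)) := by
          have := split_step hp hpm hπ hMdvd k
          rwa [← hNM] at this
        rw [hstep, ih M hMN (Nat.pos_of_ne_zero hM0) hM3]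
        -- now show (k+1) * (6 * gg M) = 6 * gg N, i.e. gg N = (k+1) * gg M
        have hfact : N.factorization = (p^k).factorization + M.factorization := by
          rw [hNM]
          exact Nat.factorization_mul (pow_ne_zero _ hp.pos.ne') hM0
        have hfq : ∀ q, q ≠ p → N.factorization q = M.factorization q := by
          intro q hq
          rw [hfact]
          simp [Nat.factorization_pow, hp.factorization, Finsupp.single_apply, hq.symm]
        have hfactp : N.factorization p = k := hk.symm
        have hMfp : M.factorization p = 0 := Nat.factorization_eq_zero_of_not_dvd hMdvd
        have hPF : N.primeFactors = insert p M.primeFactors := by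
          ext q
          simp only [Nat.mem_primeFactors, Finset.mem_insert]
          constructor
          · rintro ⟨hq, hqN, -⟩
            by_cases hqp : q = p
            · exact Or.inl hqp
            · right
              refine ⟨hq, ?_, hM0⟩
              rw [hNM] at hqN
              rcases (Nat.Prime.dvd_mul hq).mp hqN with h | h
              · exact absurd (((Nat.prime_dvd_prime_iff_eq hq hp).mp (hq.dvd_of_dvd_pow h))) hqp
              · exact h
          · rintro (rfl | ⟨hq, hqM, -⟩)
            · exact ⟨hp, hpN, hN0.ne'⟩
            · exact ⟨hq, hqM.trans ⟨p^k, by rw [hNM]; ring⟩, hN0.ne'⟩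
        have hppf : p ∉ M.primeFactors := by
          simp [Nat.mem_primeFactors, hMdvd]
        have hcond : (∀ q : ℕ, q.Prime → q % 3 = 2 → Even (N.factorization q)) ↔
            (∀ q : ℕ, q.Prime → q % 3 = 2 → Even (M.factorization q)) := by
          constructor <;> intro h q hq hq2
          · rw [← hfq q (by intro h'; rw [h'] at hq2; omega)]
            exact h q hq hq2
          · rw [hfq q (by intro h'; rw [h'] at hq2; omega)]
            exact h q hq hq2
        have hprod : ∏ q ∈ N.primeFactors.filter (fun q => q % 3 = 1), (N.factorization q + 1)
            = (k+1) * ∏ q ∈ M.primeFactors.filter (fun q => q % 3 = 1), (M.factorization q + 1) := by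
          rw [hPF, Finset.filter_insert, if_pos hpm]
          rw [Finset.prod_insert (fun hmem => hppf (Finset.mem_of_mem_filter p hmem))]
          rw [hfactp]
          congr 1
          apply Finset.prod_congr rfl
          intro q hq
          simp only [Finset.mem_filter] at hq
          rw [hfq q]
          intro h'
          exact hppf (h' ▸ hq.1)
        have hgg : gg N = (k+1) * gg M := by
          rw [gg, gg]
          by_cases hc : ∀ q : ℕ, q.Prime → q % 3 = 2 → Even (M.factorization q)
          · rw [if_pos (hcond.mpr hc), if_pos hc, hprod]
          · rw [if_neg (fun h => hc (hcond.mp h)), if_neg hc, mul_zero]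
        rw [hgg]
        ring
      · -- inert case
        by_cases hpp : p^2 ∣ N
        · set M := N / p^2 with hM
          have hNM : N = p^2 * M := (Nat.mul_div_cancel' hpp).symm
          have hM0 : M ≠ 0 := by
            intro h
            rw [h, mul_zero] at hNM
            omega
          have hMN : M < N := by
            have h2 : 2 ≤ p ^ 2 := by nlinarith [hp.two_le]
            calc M < 2 * M := by omega
              _ ≤ p ^ 2 * M := Nat.mul_le_mul_right M h2
              _ = N := hNM.symm
          have hM3 : M % 3 = 1 := by
            apply mod3_eq_one_of_cast
            have hcN : ((N:ℕ) : ZMod 3) = 1 := cast_mod3_eq hN3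
            have hcp : ((p:ℕ) : ZMod 3) = 2 := by
              rw [← ZMod.natCast_mod, hpm]; rfl
            rw [hNM] at hcN
            push_cast at hcN
            rw [hcp] at hcN
            have h22 : (2:ZMod 3)^2 = 1 := by decide
            rw [h22, one_mul] at hcN
            exact hcN
          have hstep : Nat.card (TT (N:ℤ)) = Nat.card (TT (M:ℤ)) :=
            inert_step hp hpm hNM
          rw [hstep, ih M hMN (Nat.pos_of_ne_zero hM0) hM3]
          -- gg N = gg M
          have hfact : N.factorization = (p^2).factorization + M.factorization := by
            rw [hNM]
            exact Nat.factorization_mul (pow_ne_zero _ hp.pos.ne') hM0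
          have hfq : ∀ q, q ≠ p → N.factorization q = M.factorization q := by
            intro q hq
            rw [hfact]
            simp [Nat.factorization_pow, hp.factorization, Finsupp.single_apply, hq.symm]
          have hfactp : N.factorization p = M.factorization p + 2 := by
            rw [hfact]
            simp [Nat.factorization_pow, hp.factorization, Finsupp.single_apply]
            omega
          have hPF : N.primeFactors.filter (fun q => q % 3 = 1)
              = M.primeFactors.filter (fun q => q % 3 = 1) := by
            ext q
            simp only [Finset.mem_filter, Nat.mem_primeFactors]
            constructor
            · rintro ⟨⟨hq, hqN, -⟩, hq1⟩
              have hqp : q ≠ p := by intro h'; rw [h'] at hq1; omega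
              refine ⟨⟨hq, ?_, hM0⟩, hq1⟩
              rw [hNM] at hqN
              rcases (Nat.Prime.dvd_mul hq).mp hqN with h | h
              · exact absurd (((Nat.prime_dvd_prime_iff_eq hq hp).mp (hq.dvd_of_dvd_pow h))) hqp
              · exact h
            · rintro ⟨⟨hq, hqM, -⟩, hq1⟩
              exact ⟨⟨hq, hqM.trans ⟨p^2, by rw [hNM]; ring⟩, hN0.ne'⟩, hq1⟩
          have hcond : (∀ q : ℕ, q.Prime → q % 3 = 2 → Even (N.factorization q)) ↔
              (∀ q : ℕ, q.Prime → q % 3 = 2 → Even (M.factorization q)) := by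
            have hpar : ∀ m : ℕ, Even (m + 2) ↔ Even m := fun m => by
              simp [Nat.even_add]
            constructor <;> intro h q hq hq2
            · by_cases hqp : q = p
              · have hthis := h q hq hq2
                rw [hqp, hfactp] at hthis
                rw [hqp]
                exact (hpar _).mp hthis
              · rw [← hfq q hqp]
                exact h q hq hq2
            · by_cases hqp : q = p
              · have hthis := h q hq hq2
                rw [hqp, hfactp]
                rw [hqp] at hthis
                exact (hpar _).mpr hthis
              · rw [hfq q hqp]
                exact h q hq hq2
          have hprod : ∏ q ∈ N.primeFactors.filter (fun q => q % 3 = 1), (N.factorization q + 1)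
              = ∏ q ∈ M.primeFactors.filter (fun q => q % 3 = 1), (M.factorization q + 1) := by
            rw [hPF]
            apply Finset.prod_congr rfl
            intro q hq
            simp only [Finset.mem_filter, Nat.mem_primeFactors] at hq
            rw [hfq q]
            intro h'
            rw [h'] at hq
            omega
          have hgg : gg N = gg M := by
            rw [gg, gg]
            by_cases hc : ∀ q : ℕ, q.Prime → q % 3 = 2 → Even (M.factorization q)
            · rw [if_pos (hcond.mpr hc), if_pos hc, hprod]
            · rw [if_neg (fun h => hc (hcond.mp h)), if_neg hc]
          rw [hgg]
        · -- p^2 does not divide N : card is 0 and gg N = 0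
          have hTT : TT (N:ℤ) = ∅ := inert_empty hp hpm hpN hpp
          have hcard : Nat.card (TT (N:ℤ)) = 0 := by
            rw [hTT]
            simp
          have hfp : N.factorization p = 1 := by
            have h2 : ¬ 2 ≤ N.factorization p := by
              rw [← Nat.Prime.pow_dvd_iff_le_factorization hp hN0.ne']
              exact hpp
            omega
          have hgg : gg N = 0 := by
            rw [gg, if_neg]
            intro h
            have := h p hp hpm
            rw [hfp] at this
            exact (Nat.not_even_iff_odd.mpr odd_one) this
          rw [hcard, hgg]

end Ei

/-- `C n` is the set of characteristic vectors of 3-core partitions of `n`;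
its cardinality `a₃(n)` is the number of 3-core partitions of `n`. -/
def C (n : ℤ) : Set (ℤ × ℤ) :=
  {p | 3 * p.1 ^ 2 + 3 * p.1 * p.2 + 3 * p.2 ^ 2 + p.1 + 2 * p.2 = n}

lemma card_C_eq (n : ℕ) : (C (n:ℤ)).ncard = Nat.card (Ei.SS ((3*n+1 : ℕ) : ℤ)) := by
  rw [← Nat.card_coe_set_eq]
  apply Nat.card_congr
  have h30 : (3 : ZMod 3) = 0 := by decide
  have hmem : ∀ q : ℤ × ℤ, q ∈ C (n:ℤ) → (⟨3*q.1, -(3*q.2+1)⟩ : Ei) ∈ Ei.SS ((3*n+1 : ℕ) : ℤ) := by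
    rintro ⟨x, y⟩ hq
    have hq' : 3 * x ^ 2 + 3 * x * y + 3 * y ^ 2 + x + 2 * y = (n:ℤ) := hq
    refine ⟨?_, ?_, ?_⟩
    · show (3*x) * (3*x) - (3*x) * (-(3*y+1)) + (-(3*y+1)) * (-(3*y+1)) = ((3*n+1 : ℕ) : ℤ)
      push_cast
      linear_combination 3 * hq'
    · show ((3*x : ℤ) : ZMod 3) = 0
      push_cast
      linear_combination (x : ZMod 3) * h30
    · show ((-(3*y+1) : ℤ) : ZMod 3) = 2
      push_cast
      linear_combination (-(y : ZMod 3) - 1) * h30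
  refine Equiv.ofBijective (fun q => ⟨⟨3*q.1.1, -(3*q.1.2+1)⟩, hmem q.1 q.2⟩) ⟨?_, ?_⟩
  · rintro ⟨⟨x, y⟩, hq⟩ ⟨⟨x', y'⟩, hq'⟩ heq
    simp only [Subtype.mk.injEq, Ei.mk.injEq] at heq
    have hx : x = x' := by omega
    have hy : y = y' := by omega
    simp [hx, hy]
  · rintro ⟨z, hz1, hz2, hz3⟩
    obtain ⟨x, hx⟩ : (3:ℤ) ∣ z.re := (ZMod.intCast_zmod_eq_zero_iff_dvd z.re 3).mp hz2
    obtain ⟨t, ht⟩ : (3:ℤ) ∣ (z.im + 1) := by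
      apply (ZMod.intCast_zmod_eq_zero_iff_dvd _ 3).mp
      push_cast
      rw [hz3]
      decide
    have hzim : z.im = -(3*(-t)+1) := by omega
    have hmemC : (x, -t) ∈ C (n:ℤ) := by
      have hz1' : z.re * z.re - z.re * z.im + z.im * z.im = ((3*n+1 : ℕ):ℤ) := hz1
      rw [hx, hzim] at hz1'
      push_cast at hz1'
      show 3 * x ^ 2 + 3 * x * (-t) + 3 * (-t) ^ 2 + x + 2 * (-t) = (n:ℤ)
      have h9 : (3:ℤ) * (3 * x ^ 2 + 3 * x * (-t) + 3 * (-t) ^ 2 + x + 2 * (-t)) = 3 * n := by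
        linear_combination hz1'
      exact mul_left_cancel₀ (by norm_num) h9
    refine ⟨⟨(x, -t), hmemC⟩, ?_⟩
    apply Subtype.ext
    show (⟨3*x, -(3*(-t)+1)⟩ : Ei) = z
    ext
    · exact hx.symm
    · exact hzim.symm

theorem stmt10 (n : ℕ) :
    ((∀ p : ℕ, p.Prime → p % 3 = 2 → Even ((3 * n + 1).factorization p)) →
      (C (n : ℤ)).ncard =
        ∏ p ∈ (3 * n + 1).primeFactors.filter (fun p => p % 3 = 1),
          ((3 * n + 1).factorization p + 1)) ∧
    ((¬ ∀ p : ℕ, p.Prime → p % 3 = 2 → Even ((3 * n + 1).factorization p)) →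
      (C (n : ℤ)).ncard = 0) := by
  have hmod : (3*n+1) % 3 = 1 := by omega
  have hpos : 0 < 3*n+1 := by omega
  have h6 : 6 * Nat.card (Ei.SS ((3*n+1 : ℕ) : ℤ)) = 6 * Ei.gg (3*n+1) := by
    rw [← Ei.card_TT_eq_six_mul hmod]
    exact Ei.main_count (3*n+1) hpos hmod
  have hkey : Nat.card (Ei.SS ((3*n+1 : ℕ) : ℤ)) = Ei.gg (3*n+1) :=
    Nat.eq_of_mul_eq_mul_left (by norm_num) h6
  constructor
  · intro h
    rw [card_C_eq, hkey, Ei.gg, if_pos h]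
  · intro h
    rw [card_C_eq, hkey, Ei.gg, if_neg h]
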